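/- Let w = (w_n) be a sequence of strictly positive reals with w_0 = 1, w ∈ c_0, and Σ w_n = ∞, let A be a set, and let d_*(w,1,A) be the canonical predual of the Lorentz space d(w,1,A). Then for every y in the unit sphere of d_*(w,1,A) there exists a finite set σ ⊆ A such that ||P_σ(y)|| = 1, where P_σ is the canonical coordinate projection onto coordinates in σ. -/

import Mathlib

open scoped BigOperators

variable {A : Type*} [DecidableEq A]

/-- `ȳ_k = sup { (Σ_{i<k} |y aᵢ|) / (Σ_{i<k} wᵢ) : a₀, …, a_{k-1} distinct in A }`. -/
noncomputable def lorentzBar (w : ℕ → ℝ) (y : A → ℝ) (k : ℕ) : ℝ :=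
  sSup {r : ℝ | ∃ s : Finset A, s.card = k ∧
    r = (∑ a ∈ s, |y a|) / (∑ i ∈ Finset.range k, w i)}

/-- The norm of the canonical predual `d_*(w,1,A)` of the Lorentz space `d(w,1,A)`:
`‖y‖ = sup_k ȳ_k`. -/
noncomputable def lorentzPredualNorm (w : ℕ → ℝ) (y : A → ℝ) : ℝ :=
  ⨆ k, lorentzBar w y k

/-- The coordinate projection `P_σ` onto a finite set of coordinates `σ`. -/
noncomputable def coordProj (σ : Finset A) (y : A → ℝ) : A → ℝ :=
  fun a => if a ∈ σ then y a else 0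

/-- `lorentzBar` at `k = 0` is `0`. -/
lemma lorentzBar_zero (w : ℕ → ℝ) (z : A → ℝ) : lorentzBar w z 0 = 0 := by
  have h : {r : ℝ | ∃ s : Finset A, s.card = 0 ∧
      r = (∑ a ∈ s, |z a|) / (∑ i ∈ Finset.range 0, w i)} = {0} := by
    ext r
    simp only [Set.mem_setOf_eq, Set.mem_singleton_iff]
    constructor
    · rintro ⟨s, hs, rfl⟩
      simp
    · rintro rfl
      exact ⟨∅, rfl, by simp⟩
  rw [lorentzBar, h, csSup_singleton]

/-- Greedy maximizer: if `g ≥ 0` has finite superlevel sets, then among sets of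
cardinality `k` disjoint from `B` (provided one exists), the sum of `g` attains
its maximum. -/
lemma exists_max_finset (g : A → ℝ) (hg : ∀ a, 0 ≤ g a)
    (hfin : ∀ ε : ℝ, 0 < ε → {a | ε ≤ g a}.Finite) :
    ∀ (k : ℕ) (B : Finset A), (∃ t : Finset A, Disjoint t B ∧ t.card = k) →
      ∃ s : Finset A, Disjoint s B ∧ s.card = k ∧
        ∀ t : Finset A, Disjoint t B → t.card = k → ∑ a ∈ t, g a ≤ ∑ a ∈ s, g a := by
  intro k
  induction k with
  | zero =>
    intro B _
    refine ⟨∅, Finset.disjoint_empty_left _, rfl, ?_⟩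
    intro t _ htc
    rw [Finset.card_eq_zero] at htc
    simp [htc]
  | succ k IH =>
    rintro B ⟨t₀, ht₀B, ht₀c⟩
    have ht₀ne : t₀.Nonempty := Finset.card_pos.1 (by omega)
    obtain ⟨a₀, ha₀t, ha₀max⟩ := t₀.exists_max_image g ht₀ne
    obtain ⟨a₁, ha₁B, ha₁max⟩ : ∃ a₁, a₁ ∉ B ∧ ∀ a, a ∉ B → g a ≤ g a₁ := by
      by_cases hc : ∀ a, a ∉ B → g a ≤ g a₀
      · exact ⟨a₀, fun h => (Finset.disjoint_left.1 ht₀B) ha₀t h, hc⟩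
      · push_neg at hc
        obtain ⟨b, hbB, hb⟩ := hc
        have hbpos : 0 < g b := lt_of_le_of_lt (hg a₀) hb
        classical
        set F := ((hfin (g b) hbpos).toFinset.filter (fun a => a ∉ B)) with hF
        have hbF : b ∈ F := by
          simp [hF, Set.Finite.mem_toFinset, hbB]
        obtain ⟨a₁, ha₁F, ha₁m⟩ := F.exists_max_image g ⟨b, hbF⟩
        have ha₁B : a₁ ∉ B := (Finset.mem_filter.1 ha₁F).2
        refine ⟨a₁, ha₁B, fun a haB => ?_⟩
        by_cases hab : g b ≤ g a
        · exact ha₁m a (by simp [hF, Set.Finite.mem_toFinset, hab, haB])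
        · exact le_trans (le_of_not_ge hab) (ha₁m b hbF)
    classical
    set x := if a₁ ∈ t₀ then a₁ else a₀ with hx
    have hxt : x ∈ t₀ := by
      by_cases h : a₁ ∈ t₀ <;> simp [hx, h, ha₀t]
    have ha₁t' : a₁ ∉ t₀.erase x := by
      by_cases h : a₁ ∈ t₀
      · simp [hx, h]
      · exact fun hh => h (Finset.mem_of_mem_erase hh)
    have ht₀'c : (t₀.erase x).card = k := by
      rw [Finset.card_erase_of_mem hxt, ht₀c]; omega
    have ht₀'d : Disjoint (t₀.erase x) (insert a₁ B) := by
      rw [Finset.disjoint_insert_right]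
      exact ⟨ha₁t', Finset.disjoint_of_subset_left (Finset.erase_subset _ _) ht₀B⟩
    obtain ⟨s', hs'd, hs'c, hs'max⟩ := IH (insert a₁ B) ⟨t₀.erase x, ht₀'d, ht₀'c⟩
    have ha₁s' : a₁ ∉ s' := (Finset.disjoint_insert_right.1 hs'd).1
    have hs'B : Disjoint s' B :=
      Finset.disjoint_of_subset_right (Finset.subset_insert _ _) hs'd
    refine ⟨insert a₁ s', ?_, ?_, ?_⟩
    · rw [Finset.disjoint_insert_left]
      exact ⟨ha₁B, hs'B⟩
    · rw [Finset.card_insert_of_notMem ha₁s', hs'c]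
    · intro t htB htc
      rw [Finset.sum_insert ha₁s']
      by_cases hat : a₁ ∈ t
      · have h1 : Disjoint (t.erase a₁) (insert a₁ B) := by
          rw [Finset.disjoint_insert_right]
          exact ⟨Finset.notMem_erase _ _,
            Finset.disjoint_of_subset_left (Finset.erase_subset _ _) htB⟩
        have h2 : (t.erase a₁).card = k := by rw [Finset.card_erase_of_mem hat, htc]; omega
        have h4 := hs'max _ h1 h2
        have h3 : ∑ a ∈ t, g a = g a₁ + ∑ a ∈ t.erase a₁, g a :=
          (Finset.add_sum_erase _ _ hat).symm
        linarith
      · obtain ⟨b, hbt⟩ : t.Nonempty := Finset.card_pos.1 (by omega)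
        have hbB : b ∉ B := Finset.disjoint_left.1 htB hbt
        have h1 : Disjoint (t.erase b) (insert a₁ B) := by
          rw [Finset.disjoint_insert_right]
          exact ⟨fun h => hat (Finset.mem_of_mem_erase h),
            Finset.disjoint_of_subset_left (Finset.erase_subset _ _) htB⟩
        have h2 : (t.erase b).card = k := by rw [Finset.card_erase_of_mem hbt, htc]; omega
        have h4 := hs'max _ h1 h2
        have h3 : ∑ a ∈ t, g a = g b + ∑ a ∈ t.erase b, g a :=
          (Finset.add_sum_erase _ _ hbt).symm
        have h5 := ha₁max b hbB
        linarith

/-- For every `y` in the unit sphere of the predual `d_*(w,1,A)` of a Lorentz sequence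
space (`w` strictly positive, `w₀ = 1`, `w ∈ c₀ \ ℓ₁`), there is a finite set
`σ ⊆ A` with `‖P_σ y‖ = 1`. -/
theorem lorentz_predual_norm_attained_on_finite_projection
    (w : ℕ → ℝ) (hw_pos : ∀ n, 0 < w n) (hw0 : w 0 = 1)
    (hw_c0 : Filter.Tendsto w Filter.atTop (nhds 0)) (hw_not_l1 : ¬ Summable w)
    (y : A → ℝ)
    (hy_mem : Filter.Tendsto (lorentzBar w y) Filter.atTop (nhds 0))
    (hy_norm : lorentzPredualNorm w y = 1) :
    ∃ σ : Finset A, lorentzPredualNorm w (coordProj σ y) = 1 := by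
  classical
  have hWpos : ∀ k : ℕ, 0 < k → 0 < ∑ i ∈ Finset.range k, w i := by
    intro k hk
    exact Finset.sum_pos (fun i _ => hw_pos i) (by simpa using hk.ne')
  have hWnonneg : ∀ k : ℕ, 0 ≤ ∑ i ∈ Finset.range k, w i :=
    fun k => Finset.sum_nonneg fun i _ => (hw_pos i).le
  -- the family ȳ is bounded above by 1
  have hrange_bdd : BddAbove (Set.range (lorentzBar w y)) := by
    by_contra h
    rw [lorentzPredualNorm, Real.iSup_of_not_bddAbove h] at hy_norm
    norm_num at hy_norm
  have hbar_le : ∀ k, lorentzBar w y k ≤ 1 := by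
    intro k
    rw [← hy_norm]
    exact le_ciSup hrange_bdd k
  -- y is a bounded function
  obtain ⟨M₀, hM₀⟩ : ∃ M : ℝ, ∀ a, |y a| ≤ M := by
    by_contra h
    push_neg at h
    have hA : Infinite A := by
      by_contra hfin
      rw [not_infinite_iff_finite] at hfin
      obtain ⟨M, hM⟩ := (Set.finite_range fun a => |y a|).bddAbove
      obtain ⟨a, ha⟩ := h M
      exact absurd (hM (Set.mem_range_self a)) (not_le.2 ha)
    have hzero : ∀ k, lorentzBar w y k = 0 := by
      intro k
      rcases Nat.eq_zero_or_pos k with rfl | hk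
      · exact lorentzBar_zero w y
      · apply Real.sSup_of_not_bddAbove
        rintro ⟨C, hC⟩
        obtain ⟨a, ha⟩ := h (C * ∑ i ∈ Finset.range k, w i)
        obtain ⟨t, hsub, htc⟩ := Infinite.exists_superset_card_eq ({a} : Finset A) k
          (by rw [Finset.card_singleton]; omega)
        have hle := hC ⟨t, htc, rfl⟩
        have h1 : |y a| ≤ ∑ x ∈ t, |y x| :=
          Finset.single_le_sum (f := fun x => |y x|) (fun x _ => abs_nonneg _)
            (hsub (Finset.mem_singleton_self a))
        have h2 : 0 < ∑ i ∈ Finset.range k, w i := hWpos k hk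
        have h3 : C < (∑ x ∈ t, |y x|) / ∑ i ∈ Finset.range k, w i := by
          rw [lt_div_iff₀ h2]; linarith
        linarith
    have h0 : lorentzPredualNorm w y = 0 := by
      rw [lorentzPredualNorm]
      simp [hzero]
    rw [hy_norm] at h0
    norm_num at h0
  set M : ℝ := max M₀ 0 with hMdef
  have hMy : ∀ a, |y a| ≤ M := fun a => le_max_of_le_left (hM₀ a)
  have hM0 : 0 ≤ M := le_max_right _ _
  -- the defining sets are bounded above for any function bounded by M
  have hSbdd : ∀ (z : A → ℝ), (∀ a, |z a| ≤ M) → ∀ k : ℕ,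
      BddAbove {r : ℝ | ∃ s : Finset A, s.card = k ∧
        r = (∑ a ∈ s, |z a|) / (∑ i ∈ Finset.range k, w i)} := by
    intro z hz k
    refine ⟨max ((k : ℝ) * M / ∑ i ∈ Finset.range k, w i) 0, ?_⟩
    rintro r ⟨s, hsc, rfl⟩
    rcases Nat.eq_zero_or_pos k with rfl | hk
    · simp
    · have h2 : 0 < ∑ i ∈ Finset.range k, w i := hWpos k hk
      have h1 : (∑ a ∈ s, |z a|) ≤ (k : ℝ) * M := by
        calc ∑ a ∈ s, |z a| ≤ ∑ _a ∈ s, M := Finset.sum_le_sum fun a _ => hz a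
        _ = (k : ℝ) * M := by rw [Finset.sum_const, hsc, nsmul_eq_mul]
      refine le_max_of_le_left ?_
      gcongr
  -- superlevel sets of |y| are finite
  have hlevel : ∀ ε : ℝ, 0 < ε → {a : A | ε ≤ |y a|}.Finite := by
    intro ε hε
    by_contra hinf
    have hkb : ∀ k : ℕ, 0 < k → ε * k ≤ ∑ i ∈ Finset.range k, w i := by
      intro k hk
      obtain ⟨t, hts, htc⟩ := Set.Infinite.exists_subset_card_eq hinf k
      have h1 : ε * k ≤ ∑ a ∈ t, |y a| := by
        have h := Finset.sum_le_sum (s := t) (f := fun _ => ε) (g := fun a => |y a|)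
          (fun a ha => hts ha)
        simpa [Finset.sum_const, htc, nsmul_eq_mul, mul_comm] using h
      have h2 : (∑ a ∈ t, |y a|) / (∑ i ∈ Finset.range k, w i) ≤ 1 :=
        le_trans (le_csSup (hSbdd y hMy k) ⟨t, htc, rfl⟩) (hbar_le k)
      have h3 : 0 < ∑ i ∈ Finset.range k, w i := hWpos k hk
      rw [div_le_one h3] at h2
      linarith
    have hces := hw_c0.cesaro
    obtain ⟨k, hk1, hk2⟩ := ((hces.eventually_lt_const hε).and
      (Filter.eventually_ge_atTop 1)).exists
    have hkpos : (0:ℝ) < k := by exact_mod_cast hk2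
    have h4 : (∑ i ∈ Finset.range k, w i) < ε * k := by
      have h := mul_lt_mul_of_pos_left hk1 hkpos
      rwa [← mul_assoc, mul_inv_cancel₀ hkpos.ne', one_mul, mul_comm] at h
    linarith [hkb k hk2]
  -- ȳ attains the value 1 at some k₀
  obtain ⟨k₀, hk₀⟩ : ∃ k₀, lorentzBar w y k₀ = 1 := by
    by_contra hno
    push_neg at hno
    obtain ⟨N, hN⟩ := Filter.eventually_atTop.1
      (hy_mem.eventually_lt_const (by norm_num : (0:ℝ) < 1/2))
    have hne : ((Finset.range (N+1)).image (lorentzBar w y)).Nonempty :=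
      Finset.Nonempty.image (by simp) _
    set c := ((Finset.range (N+1)).image (lorentzBar w y)).max' hne with hc
    have hc1 : c < 1 := by
      rw [hc, Finset.max'_lt_iff _ hne]
      rintro r hr
      rw [Finset.mem_image] at hr
      obtain ⟨k, -, rfl⟩ := hr
      exact lt_of_le_of_ne (hbar_le k) (hno k)
    have hub : ∀ k, lorentzBar w y k ≤ max c (1/2) := by
      intro k
      rcases le_or_gt k N with h | h
      · exact le_max_of_le_left (Finset.le_max' _ _
          (Finset.mem_image_of_mem _ (Finset.mem_range.2 (by omega))))
      · exact le_max_of_le_right (le_of_lt (hN k h.le))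
    have h1 : lorentzPredualNorm w y ≤ max c (1/2) := ciSup_le hub
    have h2 : max c (1/2) < 1 := max_lt hc1 (by norm_num)
    rw [hy_norm] at h1
    linarith
  have hk₀pos : 0 < k₀ := by
    rcases Nat.eq_zero_or_pos k₀ with rfl | h
    · rw [lorentzBar_zero] at hk₀; norm_num at hk₀
    · exact h
  -- there exists some set of cardinality k₀
  obtain ⟨t₀, ht₀⟩ : ∃ t₀ : Finset A, t₀.card = k₀ := by
    by_contra hno
    push_neg at hno
    have hemp : {r : ℝ | ∃ s : Finset A, s.card = k₀ ∧
        r = (∑ a ∈ s, |y a|) / (∑ i ∈ Finset.range k₀, w i)} = ∅ := by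
      ext r
      simp only [Set.mem_setOf_eq, Set.mem_empty_iff_false, iff_false, not_exists]
      rintro s ⟨hs, -⟩
      exact hno s hs
    rw [lorentzBar, hemp, Real.sSup_empty] at hk₀
    norm_num at hk₀
  -- the maximizing set σ
  obtain ⟨σ, -, hσc, hσmax⟩ := exists_max_finset (fun a => |y a|) (fun a => abs_nonneg _)
    hlevel k₀ ∅ ⟨t₀, Finset.disjoint_empty_right _, ht₀⟩
  have hkey : (∑ i ∈ Finset.range k₀, w i) ≤ ∑ a ∈ σ, |y a| := by
    have h1 : (1:ℝ) ≤ (∑ a ∈ σ, |y a|) / (∑ i ∈ Finset.range k₀, w i) := by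
      rw [← hk₀, lorentzBar]
      apply Real.sSup_le
      · rintro r ⟨s, hsc, rfl⟩
        have hs := hσmax s (Finset.disjoint_empty_right _) hsc
        gcongr ?_ / _
        exact hWnonneg k₀
      · exact div_nonneg (Finset.sum_nonneg fun a _ => abs_nonneg _) (hWnonneg k₀)
    rw [le_div_iff₀ (hWpos k₀ hk₀pos)] at h1
    linarith
  refine ⟨σ, ?_⟩
  have hP_le : ∀ a, |coordProj σ y a| ≤ |y a| := by
    intro a
    by_cases h : a ∈ σ <;> simp [coordProj, h]
  have hPM : ∀ a, |coordProj σ y a| ≤ M := fun a => le_trans (hP_le a) (hMy a)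
  have hbar'_le : ∀ k, lorentzBar w (coordProj σ y) k ≤ 1 := by
    intro k
    apply Real.sSup_le _ zero_le_one
    rintro r ⟨s, hsc, rfl⟩
    rcases Nat.eq_zero_or_pos k with rfl | hk
    · simp
    · have h1 : (∑ a ∈ s, |coordProj σ y a|) ≤ ∑ a ∈ s, |y a| :=
        Finset.sum_le_sum fun a _ => hP_le a
      have h2 : (∑ a ∈ s, |coordProj σ y a|) / (∑ i ∈ Finset.range k, w i)
          ≤ (∑ a ∈ s, |y a|) / (∑ i ∈ Finset.range k, w i) := by
        gcongr
        exact hWnonneg k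
      calc (∑ a ∈ s, |coordProj σ y a|) / (∑ i ∈ Finset.range k, w i)
          ≤ (∑ a ∈ s, |y a|) / (∑ i ∈ Finset.range k, w i) := h2
        _ ≤ lorentzBar w y k := le_csSup (hSbdd y hMy k) ⟨s, hsc, rfl⟩
        _ ≤ 1 := hbar_le k
  have hge : 1 ≤ lorentzBar w (coordProj σ y) k₀ := by
    have hsum : ∑ a ∈ σ, |coordProj σ y a| = ∑ a ∈ σ, |y a| :=
      Finset.sum_congr rfl (fun a ha => by simp [coordProj, ha])
    have h1 : (1:ℝ) ≤ (∑ a ∈ σ, |coordProj σ y a|) / (∑ i ∈ Finset.range k₀, w i) := by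
      rw [hsum, le_div_iff₀ (hWpos k₀ hk₀pos)]
      linarith
    exact le_trans h1 (le_csSup (hSbdd _ hPM k₀) ⟨σ, hσc, rfl⟩)
  have hle : lorentzPredualNorm w (coordProj σ y) ≤ 1 := ciSup_le hbar'_le
  have hge' : 1 ≤ lorentzPredualNorm w (coordProj σ y) :=
    le_trans hge (le_ciSup ⟨1, by rintro r ⟨k, rfl⟩; exact hbar'_le k⟩ k₀)
  linarith
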